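/- Let ∇ ⊂ ℝ⁴ be defined by x,y,z,w ≥ 0, 1-x-y ≥ 0, x+y-z ≥ 0, 1-x-y-w+z ≥ 0. For every positive integer n, the number of lattice points in n∇ equals C(n+4,4) + 3·C(n+3,4) + C(n+2,4) = (5n⁴ + 30n³ + 67n² + 66n + 24)/24. -/
import Mathlib

open Pointwise

def nabla : Set (ℝ × ℝ × ℝ × ℝ) :=
  {p : ℝ × ℝ × ℝ × ℝ |
    0 ≤ p.1 ∧
    0 ≤ p.2.1 ∧
    0 ≤ p.2.2.1 ∧
    0 ≤ p.2.2.2 ∧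
    0 ≤ 1 - p.1 - p.2.1 ∧
    0 ≤ p.1 + p.2.1 - p.2.2.1 ∧
    0 ≤ 1 - p.1 - p.2.1 - p.2.2.2 + p.2.2.1}

open Finset

lemma choose4 (m : ℕ) : 24 * Nat.choose (m + 4) 4 = (m+1)*(m+2)*(m+3)*(m+4) := by
  have h := Nat.choose_mul_factorial_mul_factorial (show 4 ≤ m + 4 by omega)
  have h2 : (m+4) - 4 = m := by omega
  rw [h2] at h
  have hf : Nat.factorial (m+4) = (m+4)*(m+3)*(m+2)*(m+1)* Nat.factorial m := by
    simp [Nat.factorial_succ]; ring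
  have hfac : Nat.factorial 4 = 24 := rfl
  rw [hfac, hf] at h
  have hp := Nat.factorial_pos m
  have : (24 * Nat.choose (m+4) 4) * Nat.factorial m
      = ((m+1)*(m+2)*(m+3)*(m+4)) * Nat.factorial m := by
    calc (24 * Nat.choose (m+4) 4) * Nat.factorial m
        = Nat.choose (m+4) 4 * 24 * Nat.factorial m := by ring
      _ = (m+4)*(m+3)*(m+2)*(m+1)* Nat.factorial m := h
      _ = ((m+1)*(m+2)*(m+3)*(m+4)) * Nat.factorial m := by ring
  exact Nat.eq_of_mul_eq_mul_right hp this

lemma chooseB (n : ℕ) :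
    24 * (Nat.choose (n + 4) 4 + 3 * Nat.choose (n + 3) 4 + Nat.choose (n + 2) 4)
      = 5*n^4 + 30*n^3 + 67*n^2 + 66*n + 24 := by
  match n with
  | 0 => decide
  | 1 => decide
  | (m+2) =>
    have h1 := choose4 (m+2)
    have h2 := choose4 (m+1)
    have h3 := choose4 m
    have e1 : m + 2 + 4 = m + 2 + 4 := rfl
    calc 24 * (Nat.choose (m+2+4) 4 + 3 * Nat.choose (m+2+3) 4 + Nat.choose (m+2+2) 4)
        = 24 * Nat.choose (m+2+4) 4 + 3 * (24 * Nat.choose (m+1+4) 4)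
            + 24 * Nat.choose (m+4) 4 := by ring_nf
      _ = (m+2+1)*(m+2+2)*(m+2+3)*(m+2+4) + 3*((m+1+1)*(m+1+2)*(m+1+3)*(m+1+4))
            + (m+1)*(m+2)*(m+3)*(m+4) := by rw [h1, h2, h3]
      _ = 5*(m+2)^4 + 30*(m+2)^3 + 67*(m+2)^2 + 66*(m+2) + 24 := by ring

lemma sq_sum (m : ℕ) : 6 * ∑ s ∈ Finset.range m, (s+1)*(s+1) = m*(m+1)*(2*m+1) := by
  induction m with
  | zero => simp
  | succ k ih =>
    rw [Finset.sum_range_succ, Nat.mul_add, ih]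
    ring

lemma innerG (d s : ℕ) : 2 * ∑ z ∈ Finset.range (s+1), (d + z + 1) = (s+1)*(2*d+s+2) := by
  induction s with
  | zero => simp; ring
  | succ k ih =>
    rw [Finset.sum_range_succ, Nat.mul_add, ih]
    ring

lemma main_poly (n : ℕ) :
    12 * ∑ s ∈ Finset.range (n+1), (s+1)*((s+1)*(2*(n-s)+s+2))
      = 5*n^4 + 30*n^3 + 67*n^2 + 66*n + 24 := by
  induction n with
  | zero => decide
  | succ k ih =>
    have hsplit : ∑ s ∈ Finset.range (k+2), (s+1)*((s+1)*(2*(k+1-s)+s+2))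
        = (∑ s ∈ Finset.range (k+1), (s+1)*((s+1)*(2*(k-s)+s+2)))
          + 2 * (∑ s ∈ Finset.range (k+1), (s+1)*(s+1))
          + (k+2)*((k+2)*(k+3)) := by
      rw [Finset.sum_range_succ]
      have hcong : ∑ s ∈ Finset.range (k+1), (s+1)*((s+1)*(2*(k+1-s)+s+2))
          = ∑ s ∈ Finset.range (k+1), ((s+1)*((s+1)*(2*(k-s)+s+2)) + 2*((s+1)*(s+1))) := by
        apply Finset.sum_congr rfl
        intro s hs
        have hs' : s ≤ k := by simpa [Nat.lt_succ_iff] using hs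
        have h1 : k + 1 - s = (k - s) + 1 := by omega
        rw [h1]; ring
      rw [hcong, Finset.sum_add_distrib, Finset.mul_sum]
      have h2 : k + 1 - (k+1) = 0 := by omega
      rw [h2]
      ring
    rw [hsplit]
    have hsq := sq_sum (k+1)
    calc 12 * ((∑ s ∈ Finset.range (k+1), (s+1)*((s+1)*(2*(k-s)+s+2)))
          + 2 * (∑ s ∈ Finset.range (k+1), (s+1)*(s+1)) + (k+2)*((k+2)*(k+3)))
        = 12 * (∑ s ∈ Finset.range (k+1), (s+1)*((s+1)*(2*(k-s)+s+2)))
          + 4 * (6 * ∑ s ∈ Finset.range (k+1), (s+1)*(s+1)) + 12*((k+2)*((k+2)*(k+3))) := by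
          ring
      _ = (5*k^4 + 30*k^3 + 67*k^2 + 66*k + 24) + 4*((k+1)*(k+2)*(2*(k+1)+1))
          + 12*((k+2)*((k+2)*(k+3))) := by rw [ih, hsq]
      _ = 5*(k+1)^4 + 30*(k+1)^3 + 67*(k+1)^2 + 66*(k+1) + 24 := by ring

lemma main_sum (n : ℕ) :
    ∑ x ∈ Finset.range (n+1), ∑ y ∈ Finset.range (n+1-x),
        ∑ z ∈ Finset.range (x+y+1), (n - (x+y) + z + 1)
      = Nat.choose (n + 4) 4 + 3 * Nat.choose (n + 3) 4 + Nat.choose (n + 2) 4 := by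
  set g : ℕ → ℕ := fun s => ∑ z ∈ Finset.range (s+1), (n - s + z + 1) with hg
  have step1 : ∀ x, ∑ y ∈ Finset.range (n+1-x), g (x+y) = ∑ s ∈ Finset.Ico x (n+1), g s := by
    intro x
    rw [Finset.sum_Ico_eq_sum_range]
  have step2 : (∑ x ∈ Finset.range (n+1), ∑ s ∈ Finset.Ico x (n+1), g s)
      = ∑ s ∈ Finset.range (n+1), (s+1) * g s := by
    have h := Finset.sum_Ico_Ico_comm 0 (n+1) (fun _ s => g s)
    simp only [← Nat.Ico_zero_eq_range] at *
    rw [h]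
    apply Finset.sum_congr rfl
    intro s _
    rw [Finset.sum_const, Nat.card_Ico, smul_eq_mul, Nat.sub_zero]
  have h24 : 24 * (∑ s ∈ Finset.range (n+1), (s+1) * g s)
      = 5*n^4 + 30*n^3 + 67*n^2 + 66*n + 24 := by
    calc 24 * (∑ s ∈ Finset.range (n+1), (s+1) * g s)
        = 12 * ∑ s ∈ Finset.range (n+1), (s+1) * (2 * g s) := by
          rw [Finset.mul_sum, Finset.mul_sum]
          apply Finset.sum_congr rfl
          intro s _
          ring
      _ = 12 * ∑ s ∈ Finset.range (n+1), (s+1)*((s+1)*(2*(n-s)+s+2)) := by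
          congr 1
          apply Finset.sum_congr rfl
          intro s _
          rw [hg]
          rw [innerG (n - s) s]
      _ = 5*n^4 + 30*n^3 + 67*n^2 + 66*n + 24 := main_poly n
  have hfinal : (∑ x ∈ Finset.range (n+1), ∑ y ∈ Finset.range (n+1-x),
        ∑ z ∈ Finset.range (x+y+1), (n - (x+y) + z + 1))
      = ∑ s ∈ Finset.range (n+1), (s+1) * g s := by
    rw [← step2]
    apply Finset.sum_congr rfl
    intro x _
    exact step1 x
  rw [hfinal]
  apply Nat.eq_of_mul_eq_mul_left (show 0 < 24 by norm_num)
  rw [h24, chooseB]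


lemma mem_smul_nabla_iff {n : ℝ} (hn : 0 < n) (x y z w : ℝ) :
    (x, y, z, w) ∈ n • nabla ↔
      0 ≤ x ∧ 0 ≤ y ∧ 0 ≤ z ∧ 0 ≤ w ∧ x + y ≤ n ∧ z ≤ x + y ∧ x + y + w ≤ n + z := by
  rw [Set.mem_smul_set_iff_inv_smul_mem₀ (ne_of_gt hn)]
  simp only [nabla, Set.mem_setOf_eq, Prod.smul_mk, smul_eq_mul]
  have hninv : 0 < n⁻¹ := inv_pos.mpr hn
  have hmul : n⁻¹ * n = 1 := inv_mul_cancel₀ (ne_of_gt hn)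
  have ex : n * (n⁻¹ * x) = x := by field_simp
  have ey : n * (n⁻¹ * y) = y := by field_simp
  have ez : n * (n⁻¹ * z) = z := by field_simp
  have ew : n * (n⁻¹ * w) = w := by field_simp
  constructor
  · rintro ⟨h1,h2,h3,h4,h5,h6,h7⟩
    refine ⟨?_,?_,?_,?_,?_,?_,?_⟩
    · linarith [mul_nonneg hn.le h1, ex]
    · linarith [mul_nonneg hn.le h2, ey]
    · linarith [mul_nonneg hn.le h3, ez]
    · linarith [mul_nonneg hn.le h4, ew]
    · linarith [mul_nonneg hn.le h5, ex, ey]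
    · linarith [mul_nonneg hn.le h6, ex, ey, ez]
    · linarith [mul_nonneg hn.le h7, ex, ey, ez, ew]
  · rintro ⟨h1,h2,h3,h4,h5,h6,h7⟩
    refine ⟨mul_nonneg hninv.le h1, mul_nonneg hninv.le h2, mul_nonneg hninv.le h3,
      mul_nonneg hninv.le h4, ?_, ?_, ?_⟩
    · linarith [mul_le_mul_of_nonneg_left h5 hninv.le, hmul]
    · linarith [mul_le_mul_of_nonneg_left h6 hninv.le]
    · linarith [mul_le_mul_of_nonneg_left h7 hninv.le, hmul]

lemma int_mem_iff (n : ℕ) (hn : 0 < n) (v : ℤ × ℤ × ℤ × ℤ) :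
    ((((v.1 : ℝ), (v.2.1 : ℝ), (v.2.2.1 : ℝ), (v.2.2.2 : ℝ)) : ℝ × ℝ × ℝ × ℝ) ∈ (n : ℝ) • nabla) ↔
      0 ≤ v.1 ∧ 0 ≤ v.2.1 ∧ 0 ≤ v.2.2.1 ∧ 0 ≤ v.2.2.2 ∧ v.1 + v.2.1 ≤ (n : ℤ) ∧
        v.2.2.1 ≤ v.1 + v.2.1 ∧ v.1 + v.2.1 + v.2.2.2 ≤ (n : ℤ) + v.2.2.1 := by
  rw [mem_smul_nabla_iff (by exact_mod_cast hn)]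
  constructor <;> intro h <;> exact_mod_cast h

def Tset (n : ℕ) : Finset (Σ _ : ℕ, Σ _ : ℕ, Σ _ : ℕ, ℕ) :=
  (Finset.range (n+1)).sigma fun x =>
    (Finset.range (n+1-x)).sigma fun y =>
      (Finset.range (x+y+1)).sigma fun z => Finset.range (n - (x+y) + z + 1)

def emb (p : Σ _ : ℕ, Σ _ : ℕ, Σ _ : ℕ, ℕ) : ℤ × ℤ × ℤ × ℤ :=
  ((p.1 : ℤ), (p.2.1 : ℤ), (p.2.2.1 : ℤ), (p.2.2.2 : ℤ))

lemma emb_inj : Function.Injective emb := by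
  rintro ⟨a,b,c,d⟩ ⟨a',b',c',d'⟩ h
  simp only [emb, Prod.mk.injEq, Int.natCast_inj] at h
  obtain ⟨rfl, rfl, rfl, rfl⟩ := h
  rfl

lemma mem_Tset (n : ℕ) (p : Σ _ : ℕ, Σ _ : ℕ, Σ _ : ℕ, ℕ) :
    p ∈ Tset n ↔ p.1 + p.2.1 ≤ n ∧ p.2.2.1 ≤ p.1 + p.2.1 ∧
      p.1 + p.2.1 + p.2.2.2 ≤ n + p.2.2.1 := by
  obtain ⟨a,b,c,d⟩ := p
  simp only [Tset, Finset.mem_sigma, Finset.mem_range]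
  omega

lemma card_Tset (n : ℕ) : (Tset n).card =
    ∑ x ∈ Finset.range (n+1), ∑ y ∈ Finset.range (n+1-x),
      ∑ z ∈ Finset.range (x+y+1), (n - (x+y) + z + 1) := by
  rw [Tset, Finset.card_sigma]
  refine Finset.sum_congr rfl fun x _ => ?_
  rw [Finset.card_sigma]
  refine Finset.sum_congr rfl fun y _ => ?_
  rw [Finset.card_sigma]
  refine Finset.sum_congr rfl fun z _ => ?_
  rw [Finset.card_range]

theorem stmt11 (n : ℕ) (hn : 0 < n) :
    {v : ℤ × ℤ × ℤ × ℤ | (((v.1 : ℝ), (v.2.1 : ℝ), (v.2.2.1 : ℝ), (v.2.2.2 : ℝ)) : ℝ × ℝ × ℝ × ℝ) ∈ (n : ℝ) • nabla}.ncard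
        = Nat.choose (n + 4) 4 + 3 * Nat.choose (n + 3) 4 + Nat.choose (n + 2) 4 ∧
      ((Nat.choose (n + 4) 4 + 3 * Nat.choose (n + 3) 4 + Nat.choose (n + 2) 4 : ℚ))
        = (5 * (n : ℚ) ^ 4 + 30 * (n : ℚ) ^ 3 + 67 * (n : ℚ) ^ 2 + 66 * (n : ℚ) ^ 1 + 24) / 24 := by
  constructor
  · have hset : {v : ℤ × ℤ × ℤ × ℤ |
        (((v.1 : ℝ), (v.2.1 : ℝ), (v.2.2.1 : ℝ), (v.2.2.2 : ℝ)) : ℝ × ℝ × ℝ × ℝ) ∈ (n : ℝ) • nabla}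
        = ↑((Tset n).image emb) := by
      ext v
      rw [Set.mem_setOf_eq, int_mem_iff n hn v, Finset.coe_image, Set.mem_image]
      constructor
      · rintro ⟨h1, h2, h3, h4, h5, h6, h7⟩
        obtain ⟨a, b, c, d⟩ := v
        simp only [Prod.fst, Prod.snd] at *
        lift a to ℕ using h1
        lift b to ℕ using h2
        lift c to ℕ using h3
        lift d to ℕ using h4
        refine ⟨⟨a, b, c, d⟩, ?_, rfl⟩
        rw [Finset.mem_coe, mem_Tset]
        constructor
        · exact_mod_cast h5
        constructor
        · exact_mod_cast h6
        · exact_mod_cast h7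
      · rintro ⟨⟨a, b, c, d⟩, hp, rfl⟩
        rw [Finset.mem_coe, mem_Tset] at hp
        simp only [emb]
        refine ⟨by positivity, by positivity, by positivity, by positivity, ?_, ?_, ?_⟩
        · exact_mod_cast hp.1
        · exact_mod_cast hp.2.1
        · exact_mod_cast hp.2.2
    rw [hset, Set.ncard_coe_finset, Finset.card_image_of_injective _ emb_inj, card_Tset,
      main_sum]
  · have h := chooseB n
    have h' : ((24 : ℚ)) * ((Nat.choose (n + 4) 4 + 3 * Nat.choose (n + 3) 4
        + Nat.choose (n + 2) 4 : ℕ) : ℚ)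
        = 5 * (n : ℚ) ^ 4 + 30 * (n : ℚ) ^ 3 + 67 * (n : ℚ) ^ 2 + 66 * (n : ℚ) + 24 := by
      exact_mod_cast congrArg (fun k : ℕ => (k : ℚ)) h
    rw [eq_div_iff (by norm_num : (24 : ℚ) ≠ 0)]
    push_cast at h' ⊢
    linarith
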